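/- Let α, β ∈ ℂ² be linearly independent with respect to the standard symmetric bilinear form (so δ² := (α·α)(β·β) − (α·β)² ≠ 0). Then there is a unique ξ ∈ span{α,β} satisfying (1/2)α·α − ξ·α = 1 and (1/2)β·β − ξ·β = 1, and the central charge c = 2 − 12 ξ·ξ is given by the explicit formula c = 2 − 3[ (4 + (α·α)(β·β))(α−β)·(α−β) + 4(α−β)·((α·α)β − (β·β)α) ] / δ². -/

import Mathlib

set_option maxHeartbeats 1000000


noncomputable def dot2 (x y : Fin 2 → ℂ) : ℂ := x 0 * y 0 + x 1 * y 1

noncomputable def crank2 (α β : Fin 2 → ℂ) : ℂ :=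
  2 - 3 * ((4 + dot2 α α * dot2 β β) * dot2 (α - β) (α - β)
      + 4 * dot2 (α - β) (dot2 α α • β - dot2 β β • α)) /
    (dot2 α α * dot2 β β - (dot2 α β) ^ 2)

theorem rank2_central_charge (α β : Fin 2 → ℂ)
    (hδ : dot2 α α * dot2 β β - (dot2 α β) ^ 2 ≠ 0) :
    (∃! ξ : Fin 2 → ℂ, ξ ∈ Submodule.span ℂ ({α, β} : Set (Fin 2 → ℂ)) ∧
        (1/2 : ℂ) * dot2 α α - dot2 ξ α = 1 ∧
        (1/2 : ℂ) * dot2 β β - dot2 ξ β = 1) ∧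
    ∀ ξ : Fin 2 → ℂ, ξ ∈ Submodule.span ℂ ({α, β} : Set (Fin 2 → ℂ)) →
      (1/2 : ℂ) * dot2 α α - dot2 ξ α = 1 →
      (1/2 : ℂ) * dot2 β β - dot2 ξ β = 1 →
      2 - 12 * dot2 ξ ξ = crank2 α β := by
  have hδu : (α 0 * α 0 + α 1 * α 1) * (β 0 * β 0 + β 1 * β 1)
      - (α 0 * β 0 + α 1 * β 1) ^ 2 ≠ 0 := by
    simpa only [dot2] using hδ
  have hd : α 0 * β 1 - α 1 * β 0 ≠ 0 := by
    intro h
    apply hδu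
    linear_combination (α 0 * β 1 - α 1 * β 0) * h
  have hδ2 : (α 0 ^ 2 + α 1 ^ 2) * (β 0 ^ 2 + β 1 ^ 2) - (α 0 * β 0 + α 1 * β 1) ^ 2 ≠ 0 := by
    intro h; apply hδu; linear_combination h
  have hδ3 : (β 0 ^ 2 + β 1 ^ 2) * (α 0 ^ 2 + α 1 ^ 2) - (β 0 * α 0 + β 1 * α 1) ^ 2 ≠ 0 := by
    intro h; apply hδu; linear_combination h
  set d := α 0 * β 1 - α 1 * β 0 with hdd
  set e1 := (1/2 : ℂ) * dot2 α α - 1 with he1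
  set e2 := (1/2 : ℂ) * dot2 β β - 1 with he2
  set a := (e1 * dot2 β β - e2 * dot2 α β) / (dot2 α α * dot2 β β - (dot2 α β) ^ 2) with ha
  set b := (e2 * dot2 α α - e1 * dot2 α β) / (dot2 α α * dot2 β β - (dot2 α β) ^ 2) with hb
  set ξ₀ := a • α + b • β with hξ₀
  have hmem : ξ₀ ∈ Submodule.span ℂ ({α, β} : Set (Fin 2 → ℂ)) := by
    apply Submodule.add_mem
    · exact Submodule.smul_mem _ _ (Submodule.subset_span (by simp))
    · exact Submodule.smul_mem _ _ (Submodule.subset_span (by simp))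
  have hcond1 : (1/2 : ℂ) * dot2 α α - dot2 ξ₀ α = 1 := by
    simp only [hξ₀, ha, hb, he1, he2, dot2, Pi.add_apply, Pi.smul_apply, smul_eq_mul]
    field_simp [hδ2]
    ring
  have hcond2 : (1/2 : ℂ) * dot2 β β - dot2 ξ₀ β = 1 := by
    simp only [hξ₀, ha, hb, he1, he2, dot2, Pi.add_apply, Pi.smul_apply, smul_eq_mul]
    field_simp [hδ3]
    ring
  have hcoord : ∀ ξ : Fin 2 → ℂ,
      (1/2 : ℂ) * dot2 α α - dot2 ξ α = 1 →
      (1/2 : ℂ) * dot2 β β - dot2 ξ β = 1 →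
      ξ 0 = (e1 * β 1 - e2 * α 1) / d ∧ ξ 1 = (e2 * α 0 - e1 * β 0) / d := by
    intro ξ h1 h2
    simp only [dot2, he1, he2] at h1 h2 ⊢
    constructor
    · rw [eq_div_iff hd]
      linear_combination (-(β 1)) * h1 + (α 1) * h2
    · rw [eq_div_iff hd]
      linear_combination (β 0) * h1 + (-(α 0)) * h2
  refine ⟨⟨ξ₀, ⟨hmem, hcond1, hcond2⟩, ?_⟩, ?_⟩
  · rintro y ⟨-, hy1, hy2⟩
    obtain ⟨hy0, hy1'⟩ := hcoord y hy1 hy2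
    obtain ⟨hx0, hx1⟩ := hcoord ξ₀ hcond1 hcond2
    funext i
    fin_cases i
    · show y 0 = ξ₀ 0
      rw [hy0, hx0]
    · show y 1 = ξ₀ 1
      rw [hy1', hx1]
  · intro ξ _ h1 h2
    obtain ⟨hx0, hx1⟩ := hcoord ξ h1 h2
    have hξξ : dot2 ξ ξ = (e1 * β 1 - e2 * α 1) / d * ((e1 * β 1 - e2 * α 1) / d)
        + (e2 * α 0 - e1 * β 0) / d * ((e2 * α 0 - e1 * β 0) / d) := by
      rw [dot2, hx0, hx1]
    rw [hξξ, crank2]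
    simp only [dot2, Pi.sub_apply, Pi.smul_apply, smul_eq_mul, he1, he2]
    field_simp [hδ2]
    ring
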